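/- The focal radius of a complete Riemannian manifold is at most half its conjugate radius: Foc(X) ≤ Conj(X)/2. -/
import Mathlib


open scoped ENNReal

/-- Abstract interface for the Jacobi-field data of a complete Riemannian manifold `X`
(Mathlib does not yet provide Riemannian metrics and Jacobi fields).
`IsNormalJacobiNorm c j` is to be read as: `c : ℝ → X` is a unit-speed geodesic and
`j = ‖J‖` for some nonzero normal Jacobi field `J` along `c`. -/
structure JacobiStructure (X : Type*) [MetricSpace X] where
  IsNormalJacobiNorm : (ℝ → X) → (ℝ → ℝ) → Prop

/-- The conjugate radius of `X`: the infimum over `x ∈ X` of the minimal `T > 0` such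
that some unit-speed geodesic `c` with `c 0 = x` carries a nonzero normal Jacobi field
`J` with `J(0) = 0 = J(T)`; `∞` if no such `T` exists. -/
noncomputable def conjRadius {X : Type*} [MetricSpace X] (JS : JacobiStructure X) : ℝ≥0∞ :=
  ⨅ x : X, sInf {T : ℝ≥0∞ | ∃ Tr : ℝ, T = ENNReal.ofReal Tr ∧ 0 < Tr ∧
    ∃ c j, JS.IsNormalJacobiNorm c j ∧ c 0 = x ∧ j 0 = 0 ∧ j Tr = 0}

/-- The focal radius of `X`: the infimum over `x ∈ X` of the minimal `T > 0` such that
some unit-speed geodesic `c` with `c 0 = x` carries a nonzero normal Jacobi field `J`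
with `J(0) = 0` and `(d/dt)‖J‖(T) = 0`; `∞` if no such `T` exists. -/
noncomputable def focRadius {X : Type*} [MetricSpace X] (JS : JacobiStructure X) : ℝ≥0∞ :=
  ⨅ x : X, sInf {T : ℝ≥0∞ | ∃ Tr : ℝ, T = ENNReal.ofReal Tr ∧ 0 < Tr ∧
    ∃ c j, JS.IsNormalJacobiNorm c j ∧ c 0 = x ∧ j 0 = 0 ∧ deriv j Tr = 0}

/-- The focal radius of a complete Riemannian manifold is at most half its conjugate
radius: `Foc(X) ≤ Conj(X)/2`.  The hypotheses record the standard facts about norms of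
Jacobi fields used in the proof: nonnegativity, differentiability, vanishing only at
isolated points, and invariance under reversal of the geodesic. -/
theorem focRadius_le_half_conjRadius
    {X : Type*} [MetricSpace X] [CompleteSpace X] (JS : JacobiStructure X)
    (hnonneg : ∀ c j, JS.IsNormalJacobiNorm c j → ∀ t, 0 ≤ j t)
    (hdiff : ∀ c j, JS.IsNormalJacobiNorm c j → ∀ t, j t ≠ 0 → DifferentiableAt ℝ j t)
    (hcont : ∀ c j, JS.IsNormalJacobiNorm c j → Continuous j)
    (hne : ∀ c j, JS.IsNormalJacobiNorm c j → ∀ a b : ℝ, a < b → j a = 0 → j b = 0 →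
      ∃ t ∈ Set.Ioo a b, j t ≠ 0)
    (hrev : ∀ c j (S : ℝ), JS.IsNormalJacobiNorm c j →
      JS.IsNormalJacobiNorm (fun t => c (S - t)) (fun t => j (S - t))) :
    focRadius JS ≤ conjRadius JS / 2 := by
  rw [ENNReal.le_div_iff_mul_le (Or.inl two_ne_zero) (Or.inl ENNReal.ofNat_ne_top)]
  unfold conjRadius
  refine le_iInf fun x => le_sInf ?_
  rintro T ⟨Tr, rfl, hTr, c, j, hJ, hc0, hj0, hjTr⟩
  -- find the maximum point of j on [0, Tr]
  obtain ⟨m, hmIcc, hmax⟩ :=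
    isCompact_Icc.exists_isMaxOn (Set.nonempty_Icc.2 hTr.le)
      (hcont c j hJ).continuousOn
  obtain ⟨t0, ht0, hjt0⟩ := hne c j hJ 0 Tr hTr hj0 hjTr
  have hjt0pos : 0 < j t0 := lt_of_le_of_ne (hnonneg c j hJ t0) (Ne.symm hjt0)
  have hjmpos : 0 < j m := lt_of_lt_of_le hjt0pos (hmax (Set.Ioo_subset_Icc_self ht0))
  have hm0 : 0 < m := hmIcc.1.lt_of_ne (by rintro rfl; exact hjmpos.ne' hj0)
  have hmTr : m < Tr := hmIcc.2.lt_of_ne (by rintro rfl; exact hjmpos.ne' hjTr)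
  have key : ∀ s : ℝ, 0 < s → s ≤ Tr / 2 →
      (∃ y : X, ENNReal.ofReal s ∈ {T : ℝ≥0∞ | ∃ Tr : ℝ, T = ENNReal.ofReal Tr ∧ 0 < Tr ∧
        ∃ c j, JS.IsNormalJacobiNorm c j ∧ c 0 = y ∧ j 0 = 0 ∧ deriv j Tr = 0}) →
      focRadius JS * 2 ≤ ENNReal.ofReal Tr := by
    rintro s hs hsTr ⟨y, hy⟩
    have h1 : focRadius JS ≤ ENNReal.ofReal s :=
      le_trans (iInf_le _ y) (sInf_le hy)
    calc focRadius JS * 2 ≤ ENNReal.ofReal s * 2 := by gcongr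
      _ = ENNReal.ofReal (s * 2) := by
          rw [ENNReal.ofReal_mul' (by norm_num)]; norm_num
      _ ≤ ENNReal.ofReal Tr := ENNReal.ofReal_le_ofReal (by linarith)
  by_cases hhalf : m ≤ Tr / 2
  · refine key m hm0 hhalf ⟨x, m, rfl, hm0, c, j, hJ, hc0, hj0, ?_⟩
    exact ((hmax.isLocalMax (Icc_mem_nhds hm0 hmTr))).deriv_eq_zero
  · push_neg at hhalf
    refine key (Tr - m) (by linarith) (by linarith)
      ⟨c Tr, Tr - m, rfl, by linarith, (fun t => c (Tr - t)), (fun t => j (Tr - t)),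
        hrev c j Tr hJ, by simp, by simpa using hjTr, ?_⟩
    have hmax' : IsMaxOn (fun t => j (Tr - t)) (Set.Icc 0 Tr) (Tr - m) := by
      intro s hs
      simp only [Set.mem_setOf_eq, sub_sub_cancel]
      exact hmax ⟨by linarith [hs.2], by linarith [hs.1]⟩
    exact (hmax'.isLocalMax (Icc_mem_nhds (by linarith) (by linarith))).deriv_eq_zero
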